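/- arXiv:2410.17579 — 3 statements merged into one kernel-verified Lean document; each statement's English description precedes it below -/
import Mathlib

section
/- Let ι be a finite type and f : Finset ι → ℝ a set function with f(∅) = 0 that is monotone (A ⊆ B implies f(A) ≤ f(B)) and submodular (for all A ⊆ B and x ∉ B, f(A ∪ {x}) − f(A) ≥ f(B ∪ {x}) − f(B)). Let b ≥ 1 with b ≤ |ι|, let A₀ = ∅, and for t = 0, …, b−1 let A_{t+1} = A_t ∪ {i_t} where i_t ∈ ι \ A_t maximizes f(A_t ∪ {i}) over i ∈ ι \ A_t. Then f(A_b) ≥ (1 − 1/e)·max{ f(S) : S ⊆ ι, |S| = b }. (This is the greedy approximation guarantee for monotone submodular maximization invoked by the paper to establish Theorem 3.3.) -/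
/-- **Greedy `(1 − 1/e)`-approximation for monotone submodular maximization**
(the classical guarantee invoked by the paper to establish its Theorem 3.3).
Let `f` be a monotone, submodular set function with `f(∅) = 0`. Starting from
`A₀ = ∅` and greedily adding, at each of `b` steps, an element not yet chosen that
maximizes `f(A_t ∪ {i})`, the output `A_b` satisfies
`f(A_b) ≥ (1 − 1/e)·f(S)` for every `S` with `|S| = b`. -/
theorem greedy_submodular_approx
    {ι : Type*} [Fintype ι] [DecidableEq ι]
    (f : Finset ι → ℝ) (hf0 : f ∅ = 0)
    (hmono : ∀ A B : Finset ι, A ⊆ B → f A ≤ f B)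
    (hsub : ∀ A B : Finset ι, A ⊆ B → ∀ x ∉ B,
      f (insert x B) - f B ≤ f (insert x A) - f A)
    (b : ℕ) (hb1 : 1 ≤ b) (hb2 : b ≤ Fintype.card ι)
    (A : ℕ → Finset ι) (hA0 : A 0 = ∅)
    (hstep : ∀ t < b, ∃ i ∉ A t, A (t + 1) = insert i (A t) ∧
      ∀ j ∉ A t, f (insert j (A t)) ≤ f (insert i (A t))) :
    ∀ S : Finset ι, S.card = b →
      f (A b) ≥ (1 - 1 / Real.exp 1) * f S := by
  intro S hS
  have hfS : (0:ℝ) ≤ f S := by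
    have := hmono ∅ S (Finset.empty_subset S); linarith [hf0]
  have hbpos : (0:ℝ) < (b:ℝ) := by exact_mod_cast hb1
  -- submodular sum bound
  have key : ∀ (T B : Finset ι),
      f (B ∪ T) - f B ≤ ∑ x ∈ T \ B, (f (insert x B) - f B) := by
    intro T
    induction T using Finset.induction with
    | empty => intro B; simp
    | @insert y T' hy ih =>
      intro B
      by_cases hyB : y ∈ B
      · have h1 : B ∪ insert y T' = B ∪ T' := by
          rw [Finset.union_insert, Finset.insert_eq_self.2 (Finset.mem_union_left _ hyB)]
        have h2 : insert y T' \ B = T' \ B := by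
          ext z
          simp only [Finset.mem_sdiff, Finset.mem_insert]
          constructor
          · rintro ⟨h | h, hz⟩
            · exact absurd (h ▸ hyB) hz
            · exact ⟨h, hz⟩
          · rintro ⟨h, hz⟩; exact ⟨Or.inr h, hz⟩
        rw [h1, h2]; exact ih B
      · have hyBT : y ∉ B ∪ T' := by
          simp only [Finset.mem_union]; push_neg; exact ⟨hyB, hy⟩
        have h1 : B ∪ insert y T' = insert y (B ∪ T') := by
          rw [Finset.union_insert]
        have h2 : insert y T' \ B = insert y (T' \ B) := by
          ext z
          simp only [Finset.mem_sdiff, Finset.mem_insert]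
          constructor
          · rintro ⟨h | h, hz⟩
            · exact Or.inl h
            · exact Or.inr ⟨h, hz⟩
          · rintro (h | ⟨h, hz⟩)
            · exact ⟨Or.inl h, h ▸ hyB⟩
            · exact ⟨Or.inr h, hz⟩
        have hynT : y ∉ T' \ B := fun h => hy (Finset.mem_sdiff.1 h).1
        rw [h1, h2, Finset.sum_insert hynT]
        have hsub' := hsub B (B ∪ T') Finset.subset_union_left y hyBT
        have := ih B
        linarith
  -- per-step bound
  have step : ∀ t < b, f S - f (A t) ≤ (b:ℝ) * (f (A (t+1)) - f (A t)) := by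
    intro t ht
    obtain ⟨i, hi, hA1, hmax⟩ := hstep t ht
    set δ := f (A (t+1)) - f (A t) with hδ
    have hδ0 : 0 ≤ δ := by
      have := hmono (A t) (A (t+1)) (by rw [hA1]; exact Finset.subset_insert _ _)
      linarith
    have h1 : f S ≤ f (A t ∪ S) := hmono S _ Finset.subset_union_right
    have h2 := key S (A t)
    have h3 : ∑ x ∈ S \ A t, (f (insert x (A t)) - f (A t)) ≤
        (S \ A t).card • δ := by
      apply Finset.sum_le_card_nsmul
      intro x hx
      have hxA : x ∉ A t := (Finset.mem_sdiff.1 hx).2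
      have := hmax x hxA
      rw [hδ, hA1]; linarith
    have h4 : ((S \ A t).card : ℝ) * δ ≤ (b:ℝ) * δ := by
      apply mul_le_mul_of_nonneg_right _ hδ0
      have : (S \ A t).card ≤ b := le_trans (Finset.card_le_card (Finset.sdiff_subset)) hS.le
      exact_mod_cast this
    have h3' : ∑ x ∈ S \ A t, (f (insert x (A t)) - f (A t)) ≤ ((S \ A t).card : ℝ) * δ := by
      simpa [nsmul_eq_mul] using h3
    linarith
  -- iterate
  have hq0 : (0:ℝ) ≤ 1 - 1 / (b:ℝ) := by
    have : 1 / (b:ℝ) ≤ 1 := by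
      rw [div_le_one hbpos]; exact_mod_cast hb1
    linarith
  have iter : ∀ t ≤ b, f S - f (A t) ≤ (1 - 1 / (b:ℝ))^t * f S := by
    intro t
    induction t with
    | zero => intro _; simp [hA0, hf0]
    | succ t ih =>
      intro ht
      have ht' : t < b := Nat.lt_of_succ_le ht
      have h1 := step t ht'
      have h2 := ih (le_of_lt ht')
      have hδ : (f S - f (A t)) / (b:ℝ) ≤ f (A (t+1)) - f (A t) := by
        rw [div_le_iff₀ hbpos]; linarith
      have : f S - f (A (t+1)) ≤ (1 - 1 / (b:ℝ)) * (f S - f (A t)) := by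
        have heq : (1 - 1 / (b:ℝ)) * (f S - f (A t))
            = (f S - f (A t)) - (f S - f (A t)) / (b:ℝ) := by
          field_simp
        rw [heq]; linarith
      calc f S - f (A (t+1)) ≤ (1 - 1 / (b:ℝ)) * (f S - f (A t)) := this
        _ ≤ (1 - 1 / (b:ℝ)) * ((1 - 1 / (b:ℝ))^t * f S) :=
            mul_le_mul_of_nonneg_left h2 hq0
        _ = (1 - 1 / (b:ℝ))^(t+1) * f S := by ring
  have hfin := iter b le_rfl
  -- (1 - 1/b)^b ≤ exp(-1)
  have hexp : (1 - 1 / (b:ℝ))^b ≤ Real.exp (-1) := by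
    have h1 : 1 - 1 / (b:ℝ) ≤ Real.exp (-(1 / (b:ℝ))) := by
      have := Real.add_one_le_exp (-(1 / (b:ℝ)))
      linarith
    calc (1 - 1 / (b:ℝ))^b ≤ (Real.exp (-(1 / (b:ℝ))))^b :=
          pow_le_pow_left₀ hq0 h1 b
      _ = Real.exp (-(1 / (b:ℝ)) * b) := by rw [← Real.exp_nat_mul]; ring_nf
      _ = Real.exp (-1) := by
          congr 1
          field_simp
  have hmul : (1 - 1 / (b:ℝ))^b * f S ≤ Real.exp (-1) * f S :=
    mul_le_mul_of_nonneg_right hexp hfS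
  have he : Real.exp (-1) = 1 / Real.exp 1 := by
    rw [Real.exp_neg]; exact (one_div _).symm
  rw [ge_iff_le]
  have : f S - f (A b) ≤ Real.exp (-1) * f S := le_trans hfin hmul
  rw [he] at this
  linarith
end

section
/- Let G be a finite simple graph with node features x : V → ℝ^F, let v ∈ V, and let L ∈ ℕ. Let B_L(v) be the set of nodes u reachable from v by a walk of length at most L, and let G' = G[B_L(v)] be the induced subgraph of G on B_L(v), with features given by the restriction of x. Then the Weisfeiler-Lehman embedding of v at depth L computed in G' equals the Weisfeiler-Lehman embedding of v at depth L computed in G, i.e., a_{G'}^L(v) = a_G^L(v). (This expresses the Sufficiency property: the depth-L WL embedding of v is determined by the data within L hops of v, i.e., by its computation tree T_v^L.) -/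
open Classical in
/-- The neighborhood of `v` in `G` as a `Finset`. -/
noncomputable def nbrFinset {V : Type*} [Fintype V] (G : SimpleGraph V) (v : V) :
    Finset V :=
  Finset.univ.filter (fun u => G.Adj v u)

/-- The Weisfeiler-Lehman embeddings `a^ℓ : V → ℝ^F`, defined by `a^0(v) = x(v)` and
`a^ℓ(v) = (1/2)·(a^{ℓ−1}(v) + (1/deg v)·∑_{u ∈ N(v)} a^{ℓ−1}(u))` (the averaged sum
being `0` when `deg v = 0`, since the empty sum is `0`). -/
noncomputable def wlEmbed {V : Type*} [Fintype V] {F : ℕ} (G : SimpleGraph V)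
    (x : V → Fin F → ℝ) : ℕ → V → Fin F → ℝ
  | 0 => x
  | (l + 1) => fun v =>
      (1 / 2 : ℝ) • (wlEmbed G x l v +
        ((nbrFinset G v).card : ℝ)⁻¹ • ∑ u ∈ nbrFinset G v, wlEmbed G x l u)

/-- The `L`-ball around `v`: all nodes reachable from `v` by a walk of length at
most `L`. -/
def ball {V : Type*} (G : SimpleGraph V) (v : V) (L : ℕ) : Set V :=
  {u | ∃ w : G.Walk v u, w.length ≤ L}

lemma wl_aux {V : Type*} [Fintype V] {F : ℕ} (G : SimpleGraph V)
    (x : V → Fin F → ℝ) (v : V) (L : ℕ)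
    [Fintype ↥(ball G v L)] :
    ∀ l u (h : u ∈ ball G v L) (w : G.Walk v u), w.length + l ≤ L →
      wlEmbed (G.induce (ball G v L)) (fun u => x u.1) l ⟨u, h⟩ =
        wlEmbed G x l u := by
  classical
  intro l
  induction l with
  | zero => intro u h w hw; rfl
  | succ l ih =>
    intro u h w hw
    have hnbr : ∀ u', G.Adj u u' → u' ∈ ball G v L := fun u' hadj =>
      ⟨w.concat hadj, by simp [SimpleGraph.Walk.length_concat]; omega⟩
    have hset : nbrFinset (G.induce (ball G v L)) ⟨u, h⟩ =
        (nbrFinset G u).subtype (· ∈ ball G v L) := by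
      ext ⟨a, ha⟩
      simp [nbrFinset, Finset.mem_subtype]
    have hcard : (nbrFinset (G.induce (ball G v L)) ⟨u, h⟩).card =
        (nbrFinset G u).card := by
      rw [hset, Finset.card_subtype, Finset.filter_true_of_mem]
      intro a ha
      exact hnbr a (by simpa [nbrFinset] using ha)
    have hsum : ∑ a ∈ nbrFinset (G.induce (ball G v L)) ⟨u, h⟩,
        wlEmbed (G.induce (ball G v L)) (fun u => x u.1) l a =
        ∑ a ∈ nbrFinset G u, wlEmbed G x l a := by
      rw [hset]
      refine Finset.sum_bij (fun a _ => a.1) ?_ ?_ ?_ ?_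
      · intro a ha; exact Finset.mem_subtype.mp ha
      · intro a _ b _ hab; exact Subtype.ext hab
      · intro b hb
        have hadj : G.Adj u b := by simpa [nbrFinset] using hb
        exact ⟨⟨b, hnbr b hadj⟩, Finset.mem_subtype.mpr hb, rfl⟩
      · intro a ha
        have hadj : G.Adj u a.1 := by
          simpa [nbrFinset] using Finset.mem_subtype.mp ha
        exact ih a.1 a.2 (w.concat hadj)
          (by simp [SimpleGraph.Walk.length_concat]; omega)
    show (1 / 2 : ℝ) • _ = (1 / 2 : ℝ) • _
    rw [hcard, hsum, ih u h w (by omega)]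

/-- **Sufficiency of the computation tree for WL embeddings.** The depth-`L` WL
embedding of `v` computed in the subgraph induced on the `L`-ball `B_L(v)` (the data
of the computation tree `T_v^L`) equals the depth-`L` WL embedding of `v` computed
in the whole graph `G`. -/
theorem wlEmbed_ball_sufficiency
    {V : Type*} [Fintype V] {F : ℕ} (G : SimpleGraph V)
    (x : V → Fin F → ℝ) (v : V) (L : ℕ) :
    letI : Fintype ↥(ball G v L) := Fintype.ofFinite _
    wlEmbed (G.induce (ball G v L)) (fun u => x u.1) L
        ⟨v, ⟨SimpleGraph.Walk.nil, by simp⟩⟩ =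
      wlEmbed G x L v := by
  letI : Fintype ↥(ball G v L) := Fintype.ofFinite _
  exact wl_aux G x v L L v _ SimpleGraph.Walk.nil (by simp)
end

section
/- Let ι be a finite type and f : Finset ι → ℝ a monotone and submodular set function. Then for every A ⊆ ι and every nonempty finite B ⊆ ι, there exists x ∈ B with f(A ∪ {x}) − f(A) ≥ (f(B) − f(A)) / |B|. (This is the key per-step marginal-gain lemma underlying the greedy (1 − 1/e) guarantee used for the paper's Theorem 3.3: at each iteration the best available element closes at least a 1/|B| fraction of the gap to the value of any target set B.) -/
/-- **Per-step marginal-gain lemma for monotone submodular functions** (the key step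
behind the greedy `(1 − 1/e)` guarantee used for the paper's Theorem 3.3).
For every set `A` and every nonempty target set `B`, some element `x ∈ B` closes at
least a `1/|B|` fraction of the gap: `f(A ∪ {x}) − f(A) ≥ (f(B) − f(A)) / |B|`. -/
theorem submodular_marginal_gain
    {ι : Type*} [Fintype ι] [DecidableEq ι]
    (f : Finset ι → ℝ)
    (hmono : ∀ A B : Finset ι, A ⊆ B → f A ≤ f B)
    (hsub : ∀ A B : Finset ι, A ⊆ B → ∀ x ∉ B,
      f (insert x B) - f B ≤ f (insert x A) - f A)
    (A B : Finset ι) (hB : B.Nonempty) :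
    ∃ x ∈ B, f (insert x A) - f A ≥ (f B - f A) / (B.card : ℝ) := by
  have key : ∀ C : Finset ι, f (A ∪ C) - f A ≤ ∑ x ∈ C, (f (insert x A) - f A) := by
    intro C
    induction C using Finset.induction_on with
    | empty => simp
    | @insert y C hy ih =>
      rw [Finset.sum_insert hy]
      have hstep : f (A ∪ insert y C) - f (A ∪ C) ≤ f (insert y A) - f A := by
        by_cases hyA : y ∈ A ∪ C
        · have h1 : A ∪ insert y C = A ∪ C := by
            rw [Finset.union_insert, Finset.insert_eq_self.mpr hyA]
          rcases Finset.mem_union.mp hyA with h | h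
          · have h2 : insert y A = A := Finset.insert_eq_self.mpr h
            rw [h1, h2]; simp
          · exact absurd h hy
        · have := hsub A (A ∪ C) Finset.subset_union_left y hyA
          rw [Finset.union_insert]
          linarith
      linarith
  have hsum : f B - f A ≤ ∑ x ∈ B, (f (insert x A) - f A) := by
    have h1 : f B ≤ f (A ∪ B) := hmono B (A ∪ B) Finset.subset_union_right
    have := key B
    linarith
  have hconst : ∑ _x ∈ B, (f B - f A) / (B.card : ℝ) = f B - f A := by
    rw [Finset.sum_const, nsmul_eq_mul]
    field_simp
  have hle : ∑ x ∈ B, (f B - f A) / (B.card : ℝ) ≤ ∑ x ∈ B, (f (insert x A) - f A) := by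
    rw [hconst]; exact hsum
  obtain ⟨x, hx, hx2⟩ := Finset.exists_le_of_sum_le hB hle
  exact ⟨x, hx, hx2⟩
end
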